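/- Suppose 𝒳 > 0 solves the Riccati equation 𝒳𝒞*𝒞𝒳 + i(𝒜𝒳 − 𝒳𝒜*) − ℬℬ* = 0. Then the matrices A = 𝒳^{−1/2} 𝒜 𝒳^{1/2} + i 𝒳^{−1/2} ℬ ℬ* 𝒳^{−1/2}, Φ₁ = i 𝒳^{1/2} 𝒞*, Φ₂ = 𝒳^{−1/2} ℬ satisfy A − A* = i (Φ₁ Φ₁* + Φ₂ Φ₂*) = i [Φ₁ Φ₂][Φ₁ Φ₂]*. -/

import Mathlib

open Matrix
open scoped ComplexOrder
open scoped MatrixOrder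

/-- From a positive definite solution 𝒳 of the Riccati equation
𝒳𝒞*𝒞𝒳 + i(𝒜𝒳 − 𝒳𝒜*) − ℬℬ* = 0, the matrices
A = 𝒳^{−1/2}𝒜𝒳^{1/2} + i𝒳^{−1/2}ℬℬ*𝒳^{−1/2}, Φ₁ = i𝒳^{1/2}𝒞*, Φ₂ = 𝒳^{−1/2}ℬ
satisfy A − A* = i(Φ₁Φ₁* + Φ₂Φ₂*) = i [Φ₁ Φ₂][Φ₁ Φ₂]*. -/
theorem stmt_18 {n p : ℕ}
    (𝒜 X : Matrix (Fin n) (Fin n) ℂ)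
    (ℬ : Matrix (Fin n) (Fin p) ℂ) (𝒞 : Matrix (Fin p) (Fin n) ℂ)
    (hX : X.PosDef)
    (hric : X * (𝒞ᴴ * 𝒞) * X + Complex.I • (𝒜 * X - X * 𝒜ᴴ) - ℬ * ℬᴴ = 0)
    (Xh : Matrix (Fin n) (Fin n) ℂ) (hXh : Xh = CFC.sqrt X)
    (A : Matrix (Fin n) (Fin n) ℂ)
    (hA : A = Xh⁻¹ * 𝒜 * Xh + Complex.I • (Xh⁻¹ * (ℬ * ℬᴴ) * Xh⁻¹))
    (Φ₁ : Matrix (Fin n) (Fin p) ℂ) (hΦ₁ : Φ₁ = Complex.I • (Xh * 𝒞ᴴ))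
    (Φ₂ : Matrix (Fin n) (Fin p) ℂ) (hΦ₂ : Φ₂ = Xh⁻¹ * ℬ) :
    A - Aᴴ = Complex.I • (Φ₁ * Φ₁ᴴ + Φ₂ * Φ₂ᴴ)
    ∧ A - Aᴴ = Complex.I • (fromCols Φ₁ Φ₂ * (fromCols Φ₁ Φ₂)ᴴ) := by
  have hH : Xhᴴ = Xh := by rw [hXh]; exact (IsSelfAdjoint.of_nonneg (CFC.sqrt_nonneg X)).star_eq
  have hXX : Xh * Xh = X := by rw [hXh]; exact CFC.sqrt_mul_sqrt_self X hX.posSemidef.nonneg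
  have hdet : IsUnit Xh.det := by
    have h2 : Xh.det * Xh.det = X.det := by rw [← det_mul, hXX]
    have hXd : IsUnit X.det := hX.det_pos.ne'.isUnit
    exact isUnit_of_mul_isUnit_left (h2 ▸ hXd)
  have hil : Xh⁻¹ * Xh = 1 := nonsing_inv_mul _ hdet
  have hir : Xh * Xh⁻¹ = 1 := mul_nonsing_inv _ hdet
  have hHinv : (Xh⁻¹)ᴴ = Xh⁻¹ := by rw [conjTranspose_nonsing_inv, hH]
  have hl : Xh⁻¹ * X = Xh := by rw [← hXX, ← mul_assoc, hil, one_mul]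
  have hr : X * Xh⁻¹ = Xh := by rw [← hXX, mul_assoc, hir, mul_one]
  have h1 : X * (𝒞ᴴ * 𝒞) * X = ℬ * ℬᴴ - Complex.I • (𝒜 * X - X * 𝒜ᴴ) := by
    have := hric
    rw [sub_eq_zero] at this
    linear_combination (norm := abel) this
  have hkey : Xh * (𝒞ᴴ * 𝒞) * Xh =
      Xh⁻¹ * (ℬ * ℬᴴ) * Xh⁻¹ - Complex.I • (Xh⁻¹ * 𝒜 * Xh - Xh * 𝒜ᴴ * Xh⁻¹) := by
    have e : Xh * (𝒞ᴴ * 𝒞) * Xh = Xh⁻¹ * (X * (𝒞ᴴ * 𝒞) * X) * Xh⁻¹ := by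
      rw [mul_assoc (Xh⁻¹), mul_assoc (X * (𝒞ᴴ * 𝒞)), hr, ← mul_assoc, ← mul_assoc, hl]
    rw [e, h1]
    simp only [Matrix.mul_sub, Matrix.sub_mul, Matrix.mul_smul, Matrix.smul_mul, mul_assoc]
    rw [hr]
    rw [show X * (𝒜ᴴ * Xh⁻¹) = Xh * (Xh * (𝒜ᴴ * Xh⁻¹)) from by rw [← hXX, mul_assoc],
      ← mul_assoc Xh⁻¹ Xh, hil, one_mul]
  have hΦ₁Φ₁ : Φ₁ * Φ₁ᴴ = Xh * (𝒞ᴴ * 𝒞) * Xh := by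
    rw [hΦ₁, conjTranspose_smul, Matrix.smul_mul, Matrix.mul_smul, smul_smul,
      Complex.star_def, Complex.conj_I, mul_neg, Complex.I_mul_I, neg_neg, one_smul,
      conjTranspose_mul, conjTranspose_conjTranspose, hH]
    simp only [Matrix.mul_assoc]
  have hΦ₂Φ₂ : Φ₂ * Φ₂ᴴ = Xh⁻¹ * (ℬ * ℬᴴ) * Xh⁻¹ := by
    rw [hΦ₂, conjTranspose_mul, hHinv]
    simp only [Matrix.mul_assoc]
  have hAH : Aᴴ = Xh * 𝒜ᴴ * Xh⁻¹ - Complex.I • (Xh⁻¹ * (ℬ * ℬᴴ) * Xh⁻¹) := by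
    rw [hA]
    simp only [conjTranspose_add, conjTranspose_smul, conjTranspose_mul, hH, hHinv,
      conjTranspose_conjTranspose, Complex.star_def, Complex.conj_I, neg_smul,
      ← sub_eq_add_neg, mul_assoc]
  have goal1 : A - Aᴴ = Complex.I • (Φ₁ * Φ₁ᴴ + Φ₂ * Φ₂ᴴ) := by
    rw [hAH, hA, hΦ₁Φ₁, hΦ₂Φ₂, hkey]
    simp only [smul_add, smul_sub, smul_smul, Complex.I_mul_I, neg_one_smul]
    abel
  refine ⟨goal1, ?_⟩
  rw [conjTranspose_fromCols_eq_fromRows_conjTranspose, fromCols_mul_fromRows]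
  exact goal1
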